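/- Let p ∈ (1,2) and a > 0, let f = f(·,a) be the unique solution of (|f'|^{p-2} f')' + f - |f'|^{p-1} = 0 on (0,∞) with f(0) = a, f'(0) = 0, and let R(a) := inf{r > 0 : f(r) = 0}. Then f(r,a) → 0 as r → R(a), so that f(·,a) is a decreasing bijection from [0,R(a)) onto (0,a], and the function ψ = ψ(·,a) : [0,1) → [0,∞) defined by ψ(1 - f(r,a)/a) := |f'(r,a)|^p / a^p for r ∈ [0,R(a)) is well defined, continuously differentiable on [0,1), positive on (0,1), and satisfies ψ(0) = 0 and ψ'(y) + (p/(p-1)) ψ(y)^{(p-1)/p} = (p a^{2-p}/(p-1))(1-y) for all y ∈ (0,1); in particular ψ'(0) = p a^{2-p}/(p-1) > 0. -/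

import Mathlib

open Set Filter Topology

/-- The extinction "radius" `R = inf{r > 0 : f(r) = 0}`, as an extended real number
(`⊤` when `f` does not vanish on `(0,∞)`). -/
noncomputable def extTime (f : ℝ → ℝ) : EReal :=
  sInf {x : EReal | ∃ r : ℝ, 0 < r ∧ f r = 0 ∧ x = (r : EReal)}

/-- `f` solves `(|f'|^{p-2} f')' + f - |f'|^{p-1} = 0` on `(0,∞)` with `f(0)=a`, `f'(0)=0`;
`fd` is the derivative of `f` and `gd` the derivative of `|f'|^{p-2} f'`, both continuous
on `[0,∞)`, so that `f ∈ C¹([0,∞))` and `|f'|^{p-2} f' ∈ C¹([0,∞))`. -/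
def IsSol (p a : ℝ) (f fd gd : ℝ → ℝ) : Prop :=
  (∀ r ∈ Set.Ici (0:ℝ), HasDerivWithinAt f (fd r) (Set.Ici 0) r) ∧
  ContinuousOn fd (Set.Ici 0) ∧
  (∀ r ∈ Set.Ici (0:ℝ), HasDerivWithinAt (fun s => |fd s| ^ (p-2) * fd s) (gd r) (Set.Ici 0) r) ∧
  ContinuousOn gd (Set.Ici 0) ∧
  (∀ r ∈ Set.Ioi (0:ℝ), gd r + f r - |fd r| ^ (p-1) = 0) ∧
  f 0 = a ∧ fd 0 = 0

lemma abs_rpow_hasDerivAt {q : ℝ} (hq : 1 < q) (x : ℝ) :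
    HasDerivAt (fun t : ℝ => |t| ^ q) (q * |x| ^ (q-2) * x) x := by
  rcases lt_trichotomy x 0 with hx | rfl | hx
  · have h1 : HasDerivAt (fun t : ℝ => (-t) ^ q) ((q * (-x) ^ (q-1)) * (-1)) x := by
      have h2 := Real.hasDerivAt_rpow_const (x := -x) (p := q) (Or.inl (by linarith))
      exact h2.comp x (hasDerivAt_neg x)
    have h3 : HasDerivAt (fun t : ℝ => |t| ^ q) ((q * (-x) ^ (q-1)) * (-1)) x := by
      apply h1.congr_of_eventuallyEq
      filter_upwards [eventually_lt_nhds hx] with t ht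
      rw [abs_of_neg ht]
    have h4 : (q * (-x) ^ (q-1)) * (-1) = q * |x| ^ (q-2) * x := by
      rw [abs_of_neg hx]
      have h5 : (-x) ^ (q-2) * (-x) ^ (1:ℝ) = (-x) ^ (q-1) := by
        rw [← Real.rpow_add (by linarith : (0:ℝ) < -x)]
        norm_num
        ring_nf
      rw [Real.rpow_one] at h5
      rw [← h5]; ring
    rwa [h4] at h3
  · rw [hasDerivAt_iff_tendsto_slope]
    have h0 : q * |(0:ℝ)| ^ (q-2) * 0 = 0 := by ring
    rw [h0]
    apply squeeze_zero_norm' (a := fun t : ℝ => |t| ^ (q-1))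
    · filter_upwards [self_mem_nhdsWithin] with t ht
      have ht' : t ≠ 0 := ht
      have : slope (fun t : ℝ => |t| ^ q) 0 t = |t| ^ q / t := by
        rw [slope_def_field]; simp [Real.zero_rpow (by linarith : q ≠ 0)]
      rw [this]
      rw [Real.norm_eq_abs, abs_div, abs_of_nonneg (Real.rpow_nonneg (abs_nonneg t) q)]
      have h6 : |t| ^ q / |t| ^ (1:ℝ) = |t| ^ (q - 1) :=
        (Real.rpow_sub (abs_pos.2 ht') q 1).symm
      rw [Real.rpow_one] at h6
      rw [h6]
    · have hc : ContinuousAt (fun t : ℝ => |t| ^ (q-1)) 0 := by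
        have : ContinuousAt (fun s : ℝ => s ^ (q-1)) |((0:ℝ))| :=
          Real.continuousAt_rpow_const _ _ (Or.inr (by linarith))
        exact this.comp continuous_abs.continuousAt
      have := hc.tendsto.mono_left (nhdsWithin_le_nhds (s := {(0:ℝ)}ᶜ))
      simpa [Real.zero_rpow (by linarith : q - 1 ≠ 0)] using this
  · have h1 : HasDerivAt (fun t : ℝ => t ^ q) (q * x ^ (q-1)) x :=
      Real.hasDerivAt_rpow_const (Or.inl (ne_of_gt hx))
    have h3 : HasDerivAt (fun t : ℝ => |t| ^ q) (q * x ^ (q-1)) x := by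
      apply h1.congr_of_eventuallyEq
      filter_upwards [eventually_gt_nhds hx] with t ht
      rw [abs_of_pos ht]
    have h4 : q * x ^ (q-1) = q * |x| ^ (q-2) * x := by
      rw [abs_of_pos hx]
      have h5 : x ^ (q-2) * x ^ (1:ℝ) = x ^ (q-1) := by
        rw [← Real.rpow_add hx]; ring_nf
      rw [Real.rpow_one] at h5
      rw [← h5]; ring
    rwa [h4] at h3

lemma gd_zero (p a : ℝ) (hp : p ∈ Set.Ioo (1:ℝ) 2) (ha : 0 < a)
    (f fd gd : ℝ → ℝ) (hf : IsSol p a f fd gd) : gd 0 = -a := by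
  obtain ⟨hDf, hCfd, hDg, hCgd, heq, hf0, hfd0⟩ := hf
  have hfc : ContinuousOn f (Ici 0) := fun r hr => (hDf r hr).continuousWithinAt
  have hmono : 𝓝[>] (0:ℝ) ≤ 𝓝[Ici 0] (0:ℝ) := nhdsWithin_mono 0 Ioi_subset_Ici_self
  have h1 : Tendsto gd (𝓝[>] (0:ℝ)) (𝓝 (gd 0)) := (hCgd 0 Set.self_mem_Ici).tendsto.mono_left hmono
  have h2 : Tendsto (fun r => |fd r| ^ (p-1) - f r) (𝓝[>] (0:ℝ)) (𝓝 (0 - a)) := by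
    apply Tendsto.sub
    · have hfdt : Tendsto fd (𝓝[>] (0:ℝ)) (𝓝 0) := by
        have h := (hCfd 0 Set.self_mem_Ici).tendsto
        rw [hfd0] at h
        exact h.mono_left hmono
      have habs : ContinuousAt (fun x : ℝ => |x| ^ (p-1)) 0 := by
        have h : ContinuousAt (fun s : ℝ => s ^ (p-1)) |(0:ℝ)| :=
          Real.continuousAt_rpow_const _ _ (Or.inr (by linarith [hp.1]))
        exact h.comp continuous_abs.continuousAt
      have h := habs.tendsto.comp hfdt
      simpa [Function.comp_def, Real.zero_rpow (by linarith [hp.1] : p - 1 ≠ 0)] using h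
    · have h := (hfc 0 Set.self_mem_Ici).tendsto
      rw [hf0] at h
      exact h.mono_left hmono
  have h3 : Tendsto gd (𝓝[>] (0:ℝ)) (𝓝 (0 - a)) := by
    apply h2.congr'
    filter_upwards [self_mem_nhdsWithin] with r hr
    have := heq r hr
    linarith
  have := tendsto_nhds_unique h1 h3
  linarith

lemma core (p a : ℝ) (hp : p ∈ Set.Ioo (1:ℝ) 2) (ha : 0 < a)
    (f fd gd : ℝ → ℝ) (hf : IsSol p a f fd gd) (b : ℝ)
    (hb : ∀ s, 0 < s → s < b → f s ≠ 0) :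
    ∀ s, 0 < s → s < b → 0 < f s ∧ fd s < 0 := by
  have hgd0 : gd 0 = -a := gd_zero p a hp ha f fd gd hf
  obtain ⟨hDf, hCfd, hDg, hCgd, heq, hf0, hfd0⟩ := hf
  set g : ℝ → ℝ := fun s => |fd s| ^ (p-2) * fd s with hgdef
  have hfc : ContinuousOn f (Ici 0) := fun r hr => (hDf r hr).continuousWithinAt
  have hgc : ContinuousOn g (Ici 0) := fun r hr => (hDg r hr).continuousWithinAt
  have hDgAt : ∀ r, 0 < r → HasDerivAt g (gd r) r :=
    fun r hr => (hDg r hr.le).hasDerivAt (Ici_mem_nhds hr)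
  have hpos : ∀ s, 0 < s → s < b → 0 < f s := by
    intro s hs hsb
    rcases lt_trichotomy (f s) 0 with h | h | h
    · exfalso
      have hIVT : (0:ℝ) ∈ f '' Ioo 0 s := by
        have hc : ContinuousOn f (Icc 0 s) := hfc.mono (Icc_subset_Ici_self)
        apply intermediate_value_Ioo' hs.le hc
        rw [hf0]; exact ⟨h, ha⟩
      obtain ⟨t, ht, hft⟩ := hIVT
      exact hb t ht.1 (lt_trans ht.2 hsb) hft
    · exact absurd h (hb s hs hsb)
    · exact h
  -- helper: strict decrease of g on intervals where gd < 0
  have anti : ∀ c d : ℝ, 0 ≤ c → c < d → (∀ x, c ≤ x → x ≤ d → gd x < 0) → g d < g c := by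
    intro c d hc hcd hneg
    have hs : StrictAntiOn g (Icc c d) := by
      apply strictAntiOn_of_deriv_neg (convex_Icc c d)
      · exact hgc.mono (fun x hx => le_trans hc hx.1)
      · intro x hx
        rw [interior_Icc] at hx
        rw [(hDgAt x (lt_of_le_of_lt hc hx.1)).deriv]
        exact hneg x hx.1.le hx.2.le
    exact hs (left_mem_Icc.2 hcd.le) (right_mem_Icc.2 hcd.le) hcd
  have hg0 : g 0 = 0 := by simp [hgdef, hfd0]
  -- gd < 0 near 0
  obtain ⟨δ, hδpos, hδ⟩ : ∃ δ, 0 < δ ∧ ∀ x ∈ Ico (0:ℝ) δ, gd x < 0 := by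
    have hev : ∀ᶠ x in 𝓝[Ici 0] (0:ℝ), gd x < 0 := by
      have h := (hCgd 0 Set.self_mem_Ici).tendsto
      rw [hgd0] at h
      exact h.eventually (eventually_lt_nhds (by linarith))
    obtain ⟨δ, hδpos, hδ⟩ :=
      (nhdsGE_basis_of_exists_gt (α := ℝ) (a := 0) ⟨1, zero_lt_one⟩).eventually_iff.mp hev
    exact ⟨δ, hδpos, fun x hx => hδ hx⟩
  have hgsmall : ∀ s, 0 < s → s < δ → g s < 0 := by
    intro s hs hsδ
    have := anti 0 s le_rfl hs (fun x hx hxs => hδ x ⟨hx, lt_of_le_of_lt hxs hsδ⟩)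
    rwa [hg0] at this
  have hgneg : ∀ s, 0 < s → s < b → fd s < 0 := by
    by_contra hcon
    push_neg at hcon
    obtain ⟨s₀, hs₀pos, hs₀b, hfds₀⟩ := hcon
    have hgs₀ : 0 ≤ g s₀ :=
      mul_nonneg (Real.rpow_nonneg (abs_nonneg _) _) hfds₀
    set δ₀ : ℝ := min (δ/2) s₀ with hδ₀def
    have hδ₀pos : 0 < δ₀ := lt_min (by linarith) hs₀pos
    have hδ₀δ : δ₀ < δ := lt_of_le_of_lt (min_le_left _ _) (by linarith)
    have hδ₀s₀ : δ₀ ≤ s₀ := min_le_right _ _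
    set C : Set ℝ := Icc δ₀ s₀ ∩ g ⁻¹' (Ici 0) with hCdef
    have hCclosed : IsClosed C :=
      ContinuousOn.preimage_isClosed_of_isClosed
        (hgc.mono (fun x hx => le_trans hδ₀pos.le hx.1)) isClosed_Icc isClosed_Ici
    have hCne : C.Nonempty := ⟨s₀, ⟨⟨hδ₀s₀, le_rfl⟩, hgs₀⟩⟩
    have hCbdd : BddBelow C := ⟨δ₀, fun x hx => hx.1.1⟩
    set r₀ : ℝ := sInf C with hr₀def
    have hr₀mem : r₀ ∈ C := hCclosed.csInf_mem hCne hCbdd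
    have hr₀pos : 0 < r₀ := lt_of_lt_of_le hδ₀pos hr₀mem.1.1
    have hr₀b : r₀ < b := lt_of_le_of_lt hr₀mem.1.2 hs₀b
    have hglt : ∀ t, 0 < t → t < r₀ → g t < 0 := by
      intro t ht htr
      rcases lt_or_ge t δ₀ with h | h
      · exact hgsmall t ht (lt_of_lt_of_le h (le_of_lt hδ₀δ))
      · by_contra hge
        push_neg at hge
        have htC : t ∈ C := ⟨⟨h, le_trans htr.le hr₀mem.1.2⟩, hge⟩
        exact absurd (csInf_le hCbdd htC) (not_le.2 htr)
    have hgr₀ : g r₀ = 0 := by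
      refine le_antisymm ?_ hr₀mem.2
      have htd : Tendsto g (𝓝[<] r₀) (𝓝 (g r₀)) :=
        ((hgc.continuousAt (Ici_mem_nhds hr₀pos)).tendsto).mono_left nhdsWithin_le_nhds
      apply le_of_tendsto htd
      filter_upwards [Ioo_mem_nhdsLT (by linarith : r₀/2 < r₀)] with t ht
      exact (hglt t (by linarith [ht.1]) ht.2).le
    have hfdr₀ : fd r₀ = 0 := by
      by_contra hne
      exact (mul_ne_zero (ne_of_gt (Real.rpow_pos_of_pos (abs_pos.2 hne) _)) hne) hgr₀
    have hgdr₀ : gd r₀ = -f r₀ := by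
      have h := heq r₀ hr₀pos
      rw [hfdr₀] at h
      simp only [abs_zero, Real.zero_rpow (by linarith [hp.1] : p - 1 ≠ 0)] at h
      linarith
    have hfr₀ : 0 < f r₀ := hpos r₀ hr₀pos hr₀b
    have hev : ∀ᶠ x in 𝓝 r₀, gd x < 0 := by
      have hca := (hCgd.continuousAt (Ici_mem_nhds hr₀pos)).tendsto
      refine hca.eventually (eventually_lt_nhds ?_)
      rw [hgdr₀]; linarith
    obtain ⟨ε, hε, hball⟩ := Metric.eventually_nhds_iff.mp hev
    set c : ℝ := max (r₀/2) (r₀ - ε/2) with hcdef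
    have hc1 : 0 < c := lt_of_lt_of_le (by linarith) (le_max_left _ _)
    have hc2 : c < r₀ := max_lt (by linarith) (by linarith)
    have hkey : g r₀ < g c := by
      apply anti c r₀ hc1.le hc2
      intro x hx hxr
      apply hball
      rw [Real.dist_eq, abs_of_nonpos (by linarith)]
      have : r₀ - ε/2 ≤ c := le_max_right _ _
      linarith
    have := hglt c hc1 hc2
    rw [hgr₀] at hkey
    linarith
  exact fun s hs hsb => ⟨hpos s hs hsb, hgneg s hs hsb⟩

lemma tendsto_of_no_zero (p a : ℝ) (hp : p ∈ Set.Ioo (1:ℝ) 2) (ha : 0 < a)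
    (f fd gd : ℝ → ℝ) (hf : IsSol p a f fd gd) (hz : ∀ r, 0 < r → f r ≠ 0) :
    Tendsto f atTop (𝓝 0) := by
  have hcore : ∀ s, 0 < s → 0 < f s ∧ fd s < 0 :=
    fun s hs => core p a hp ha f fd gd hf (s+1) (fun t ht _ => hz t ht) s hs (lt_add_one s)
  obtain ⟨hDf, hCfd, hDg, hCgd, heq, hf0, hfd0⟩ := hf
  set g : ℝ → ℝ := fun s => |fd s| ^ (p-2) * fd s with hgdef
  have hfc : ContinuousOn f (Ici 0) := fun r hr => (hDf r hr).continuousWithinAt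
  have hgc : ContinuousOn g (Ici 0) := fun r hr => (hDg r hr).continuousWithinAt
  have hDgAt : ∀ r, 0 < r → HasDerivAt g (gd r) r :=
    fun r hr => (hDg r hr.le).hasDerivAt (Ici_mem_nhds hr)
  have hDfAt : ∀ r, 0 < r → HasDerivAt f (fd r) r :=
    fun r hr => (hDf r hr.le).hasDerivAt (Ici_mem_nhds hr)
  have hf_nonneg : ∀ r, 0 ≤ r → 0 ≤ f r := by
    intro r hr
    rcases eq_or_lt_of_le hr with h | h
    · rw [← h, hf0]; exact ha.le
    · exact (hcore r h).1.le
  have hfanti : AntitoneOn f (Ici 0) := by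
    apply antitoneOn_of_deriv_nonpos (convex_Ici 0) hfc
    · intro x hx
      rw [interior_Ici] at hx
      exact (hDfAt x hx).differentiableAt.differentiableWithinAt
    · intro x hx
      rw [interior_Ici] at hx
      rw [(hDfAt x hx).deriv]
      exact (hcore x hx).2.le
  set F : ℝ → ℝ := fun r => f (max r 0) with hFdef
  have hFanti : Antitone F := fun x y hxy =>
    hfanti (le_max_right x 0) (le_max_right y 0) (max_le_max hxy le_rfl)
  have hFbdd : BddBelow (range F) := by
    refine ⟨0, ?_⟩
    rintro z ⟨x, rfl⟩
    exact hf_nonneg _ (le_max_right x 0)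
  have htend : Tendsto F atTop (𝓝 (⨅ i, F i)) := tendsto_atTop_ciInf hFanti hFbdd
  set L : ℝ := ⨅ i, F i with hLdef
  have hL0 : 0 ≤ L := le_ciInf (fun x => hf_nonneg _ (le_max_right x 0))
  have hLle : ∀ r, 0 ≤ r → L ≤ f r := by
    intro r hr
    have h := ciInf_le hFbdd r
    rwa [show F r = f r by rw [hFdef]; simp [max_eq_left hr]] at h
  have hLzero : L = 0 := by
    by_contra hL
    have hLpos : 0 < L := lt_of_le_of_ne hL0 (Ne.symm hL)
    have hfgtL : ∀ r, 0 < r → L < f r := by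
      intro r hr
      have h1 : L ≤ f (r+1) := hLle (r+1) (by linarith)
      have h2 : f (r+1) < f r := by
        have hstrict : StrictAntiOn f (Ici 0) := by
          apply strictAntiOn_of_deriv_neg (convex_Ici 0) hfc
          intro x hx
          rw [interior_Ici] at hx
          rw [(hDfAt x hx).deriv]
          exact (hcore x hx).2
        exact hstrict hr.le (by linarith : (0:ℝ) ≤ r + 1) (lt_add_one r)
      linarith
    set u : ℝ → ℝ := fun s => -g s with hudef
    have hDuAt : ∀ r, 0 < r → HasDerivAt u (-gd r) r := fun r hr => (hDgAt r hr).neg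
    have huc : ContinuousOn u (Ici 0) := hgc.neg
    have huval : ∀ r, 0 < r → u r = |fd r| ^ (p-1) := by
      intro r hr
      have hfdneg : fd r < 0 := (hcore r hr).2
      have h5 : |fd r| ^ (p-2) * |fd r| ^ (1:ℝ) = |fd r| ^ (p-1) := by
        rw [← Real.rpow_add (abs_pos.2 hfdneg.ne)]; ring_nf
      have h6 : u r = |fd r| ^ (p-2) * (-fd r) := by
        show -( |fd r| ^ (p-2) * fd r) = _
        ring
      rw [h6, ← abs_of_neg hfdneg]
      nth_rewrite 2 [← Real.rpow_one |fd r|]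
      exact h5
    have hupos : ∀ r, 0 < r → 0 < u r := by
      intro r hr
      rw [huval r hr]
      exact Real.rpow_pos_of_pos (abs_pos.2 (hcore r hr).2.ne) _
    have hnegderiv : ∀ r, 0 < r → -gd r = f r - u r := by
      intro r hr
      have h := heq r hr
      rw [huval r hr]
      linarith
    set c : ℝ := min (u 1) L with hcdef
    have hcpos : 0 < c := lt_min (hupos 1 one_pos) hLpos
    have claim : ∀ s, 1 ≤ s → c ≤ u s := by
      intro s hs
      by_contra hlt
      push_neg at hlt
      have hs1 : 1 < s := by
        rcases eq_or_lt_of_le hs with h | h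
        · exfalso; rw [← h] at hlt; exact absurd (min_le_left (u 1) L) (not_le.2 hlt)
        · exact h
      set C : Set ℝ := Icc 1 s ∩ u ⁻¹' (Ici c) with hCdef
      have hCclosed : IsClosed C :=
        ContinuousOn.preimage_isClosed_of_isClosed
          (huc.mono (fun x hx => le_trans zero_le_one hx.1)) isClosed_Icc isClosed_Ici
      have hCne : C.Nonempty := ⟨1, ⟨⟨le_rfl, hs⟩, show c ≤ u 1 from min_le_left _ _⟩⟩
      have hCbdd : BddAbove C := ⟨s, fun x hx => hx.1.2⟩
      set t₀ : ℝ := sSup C with ht₀def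
      have ht₀mem : t₀ ∈ C := hCclosed.csSup_mem hCne hCbdd
      have ht₀s : t₀ < s := by
        rcases eq_or_lt_of_le ht₀mem.1.2 with h | h
        · exfalso; have := ht₀mem.2; rw [h] at this; exact absurd this (not_le.2 hlt)
        · exact h
      have ht₀1 : 1 ≤ t₀ := ht₀mem.1.1
      have hult : ∀ t, t₀ < t → t ≤ s → u t < c := by
        intro t ht hts
        by_contra hge
        push_neg at hge
        have : t ∈ C := ⟨⟨le_trans ht₀1 ht.le, hts⟩, hge⟩
        exact absurd (le_csSup hCbdd this) (not_le.2 ht)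
      have hmono : StrictMonoOn u (Icc t₀ s) := by
        apply strictMonoOn_of_deriv_pos (convex_Icc t₀ s)
        · exact huc.mono (fun x hx => le_trans (by linarith) hx.1)
        · intro x hx
          rw [interior_Icc] at hx
          have hx0 : 0 < x := by linarith [hx.1]
          rw [(hDuAt x hx0).deriv, hnegderiv x hx0]
          have h1 : u x < c := hult x hx.1 hx.2.le
          have h2 : L < f x := hfgtL x hx0
          have h3 : c ≤ L := min_le_right _ _
          linarith
      have h8 := hmono (left_mem_Icc.2 ht₀s.le) (right_mem_Icc.2 ht₀s.le) ht₀s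
      have h7 : c ≤ u t₀ := ht₀mem.2
      linarith
    set c' : ℝ := c ^ (p-1)⁻¹ with hc'def
    have hc'pos : 0 < c' := Real.rpow_pos_of_pos hcpos _
    have hfdle : ∀ s, 1 ≤ s → fd s ≤ -c' := by
      intro s hs
      have hs0 : (0:ℝ) < s := by linarith
      have h1 : c ≤ |fd s| ^ (p-1) := by rw [← huval s hs0]; exact claim s hs
      have h2 : c' ≤ |fd s| := by
        have h3 := Real.rpow_le_rpow hcpos.le h1 (by rw [inv_nonneg]; linarith [hp.1] : (0:ℝ) ≤ (p-1)⁻¹)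
        rwa [← Real.rpow_mul (abs_nonneg _),
          mul_inv_cancel₀ (by linarith [hp.1] : p - 1 ≠ 0), Real.rpow_one] at h3
      have h4 : fd s < 0 := (hcore s hs0).2
      rw [abs_of_neg h4] at h2
      linarith
    have hφ : AntitoneOn (fun r => f r + c' * r) (Ici 1) := by
      apply antitoneOn_of_deriv_nonpos (convex_Ici 1)
      · exact (hfc.mono (fun x (hx : x ∈ Ici (1:ℝ)) => show (0:ℝ) ≤ x from le_trans zero_le_one hx)).add
          ((continuous_const.mul continuous_id).continuousOn)
      · intro x hx
        rw [interior_Ici] at hx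
        have hx1 : 1 < x := hx
        exact ((hDfAt x (by linarith)).add
          ((hasDerivAt_id x).const_mul c')).differentiableAt.differentiableWithinAt
      · intro x hx
        rw [interior_Ici] at hx
        have hx1 : 1 < x := hx
        have hD : HasDerivAt (fun r => f r + c' * r) (fd x + c' * 1) x :=
          (hDfAt x (by linarith)).add ((hasDerivAt_id x).const_mul c')
        rw [hD.deriv]
        have := hfdle x hx1.le
        linarith
    obtain ⟨s, hsval⟩ : ∃ s : ℝ, s = 1 + f 1 / c' + 1 := ⟨_, rfl⟩
    have hf1nn : 0 ≤ f 1 / c' := div_nonneg (hf_nonneg 1 zero_le_one) hc'pos.le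
    have hs1 : (1:ℝ) ≤ s := by rw [hsval]; linarith
    have hkey := hφ self_mem_Ici (mem_Ici.2 hs1) hs1
    simp only at hkey
    have hcancel : c' * (f 1 / c') = f 1 := by field_simp
    have hexp : c' * s = c' + f 1 + c' := by
      rw [hsval, mul_add, mul_add, hcancel]; ring
    have hfsL : L ≤ f s := hLle s (by linarith)
    rw [hexp] at hkey
    linarith
  have hfeq : F =ᶠ[atTop] f := by
    filter_upwards [eventually_ge_atTop (0:ℝ)] with r hr
    rw [hFdef]; simp [max_eq_left hr]
  rw [hLzero] at htend
  exact htend.congr' hfeq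

lemma psi_part (p a : ℝ) (hp : p ∈ Set.Ioo (1:ℝ) 2) (ha : 0 < a)
    (f fd gd : ℝ → ℝ) (hf : IsSol p a f fd gd)
    (D : Set ℝ) (hDD : D = {r : ℝ | 0 ≤ r ∧ (r : EReal) < extTime f})
    (hDicc : ∀ r ∈ D, Icc 0 r ⊆ D)
    (hDopen : ∀ r ∈ D, ∃ r', r' ∈ D ∧ r < r')
    (hDpos : ∀ r ∈ D, 0 < r → 0 < f r ∧ fd r < 0)
    (hD0 : (0:ℝ) ∈ D)
    (hanti : StrictAntiOn f D)
    (himage : f '' D = Ioc 0 a) :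
    ∃ ψ ψd : ℝ → ℝ,
      (∀ r : ℝ, 0 ≤ r → (r : EReal) < extTime f →
        ψ (1 - f r / a) = |fd r| ^ p / a ^ p) ∧
      (∀ y ∈ Set.Ico (0:ℝ) 1, HasDerivWithinAt ψ (ψd y) (Set.Ico 0 1) y) ∧
      ContinuousOn ψd (Set.Ico 0 1) ∧
      (∀ y ∈ Set.Ico (0:ℝ) 1, 0 ≤ ψ y) ∧
      (∀ y ∈ Set.Ioo (0:ℝ) 1, 0 < ψ y) ∧
      ψ 0 = 0 ∧
      (∀ y ∈ Set.Ioo (0:ℝ) 1,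
        ψd y + (p/(p-1)) * ψ y ^ ((p-1)/p) = (p * a ^ (2-p) / (p-1)) * (1-y)) ∧
      ψd 0 = p * a ^ (2-p) / (p-1) ∧ 0 < ψd 0 := by
  classical
  have hp1 : 1 < p := hp.1
  have hp2 : p < 2 := hp.2
  have hgd0 : gd 0 = -a := gd_zero p a hp ha f fd gd hf
  obtain ⟨hDf, hCfd, hDg, hCgd, heq, hf0, hfd0⟩ := hf
  set g : ℝ → ℝ := fun s => |fd s| ^ (p-2) * fd s with hgdef
  have hfc : ContinuousOn f (Ici 0) := fun r hr => (hDf r hr).continuousWithinAt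
  have hgc : ContinuousOn g (Ici 0) := fun r hr => (hDg r hr).continuousWithinAt
  have hDfAt : ∀ r : ℝ, 0 < r → HasDerivAt f (fd r) r :=
    fun r hr => (hDf r hr.le).hasDerivAt (Ici_mem_nhds hr)
  have hDgAt : ∀ r : ℝ, 0 < r → HasDerivAt g (gd r) r :=
    fun r hr => (hDg r hr.le).hasDerivAt (Ici_mem_nhds hr)
  have hDsub : ∀ r ∈ D, (0:ℝ) ≤ r := by rw [hDD]; exact fun r hr => hr.1
  set q : ℝ := p / (p-1) with hqdef
  have hq2 : 2 < q := by rw [hqdef, lt_div_iff₀ (by linarith)]; linarith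
  have hq1 : 1 < q := by linarith
  have hann : a ^ (p-1) ≠ 0 := (Real.rpow_pos_of_pos ha _).ne'
  have hapn : a ^ p ≠ 0 := (Real.rpow_pos_of_pos ha _).ne'
  have hpn : p - 1 ≠ 0 := by linarith
  -- Y and its properties
  set Y : ℝ → ℝ := fun r => 1 - f r / a with hYdef
  have hYD : ∀ r : ℝ, 0 < r → HasDerivAt Y (-(fd r)/a) r := by
    intro r hr
    have h1 : HasDerivAt (fun x => 1 - f x / a) (-(fd r / a)) r :=
      ((hDfAt r hr).div_const a).const_sub 1
    simpa [neg_div] using h1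
  have hYc : ContinuousOn Y (Ici 0) := continuousOn_const.sub (hfc.div_const a)
  have hYmono : StrictMonoOn Y D := by
    intro x hx y hy hxy
    have h := hanti hx hy hxy
    have h2 : f y * a⁻¹ < f x * a⁻¹ := mul_lt_mul_of_pos_right h (inv_pos.2 ha)
    rw [hYdef]
    simp only [div_eq_mul_inv]
    linarith
  have hYim : Y '' D = Ico 0 1 := by
    ext y
    simp only [mem_image, mem_Ico]
    constructor
    · rintro ⟨t, htD, rfl⟩
      have htmem : f t ∈ Ioc 0 a := himage ▸ mem_image_of_mem f htD
      constructor
      · have : f t / a ≤ 1 := (div_le_one ha).2 htmem.2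
        rw [hYdef]; simp only; linarith
      · have : 0 < f t / a := div_pos htmem.1 ha
        rw [hYdef]; simp only; linarith
    · rintro ⟨hy0, hy1⟩
      have hmem : a * (1 - y) ∈ Ioc 0 a := by
        constructor
        · exact mul_pos ha (by linarith)
        · nlinarith
      rw [← himage] at hmem
      obtain ⟨t, htD, hft⟩ := hmem
      refine ⟨t, htD, ?_⟩
      show 1 - f t / a = y
      rw [hft]
      field_simp
      ring

  -- the inverse function ρ
  have hsurj : ∀ y ∈ Ico (0:ℝ) 1, ∃ r, r ∈ D ∧ Y r = y := by
    intro y hy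
    rw [← hYim] at hy
    obtain ⟨r, hr, hYr⟩ := hy
    exact ⟨r, hr, hYr⟩
  set ρ : ℝ → ℝ := fun y => if h : ∃ r, r ∈ D ∧ Y r = y then h.choose else 0 with hρdef
  have hρ : ∀ y ∈ Ico (0:ℝ) 1, ρ y ∈ D ∧ Y (ρ y) = y := by
    intro y hy
    have h := hsurj y hy
    rw [hρdef]
    simp only [dif_pos h]
    exact h.choose_spec
  have hρmem : ∀ y ∈ Ico (0:ℝ) 1, ρ y ∈ D := fun y hy => (hρ y hy).1
  have hYinj : InjOn Y D := hYmono.injOn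
  have hρY : ∀ r ∈ D, ρ (Y r) = r := by
    intro r hr
    have hYr : Y r ∈ Ico (0:ℝ) 1 := by rw [← hYim]; exact mem_image_of_mem _ hr
    exact hYinj (hρ _ hYr).1 hr (hρ _ hYr).2
  have hY0 : Y 0 = 0 := by rw [hYdef]; simp [hf0, div_self ha.ne']
  have hρ0 : ρ 0 = 0 := by have h := hρY 0 hD0; rwa [hY0] at h
  have hρpos : ∀ y ∈ Ico (0:ℝ) 1, 0 < y → 0 < ρ y := by
    intro y hy hypos
    have h1 : (0:ℝ) ≤ ρ y := hDsub _ (hρmem y hy)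
    rcases eq_or_lt_of_le h1 with h | h
    · exfalso
      have h2 := (hρ y hy).2
      rw [← h, hY0] at h2
      linarith
    · exact h
  have hρlt : ∀ y ∈ Ico (0:ℝ) 1, ∀ r ∈ D, y < Y r → ρ y < r := by
    intro y hy r hr hyr
    by_contra hcon
    push_neg at hcon
    rcases eq_or_lt_of_le hcon with h | h
    · rw [h] at hyr; rw [(hρ y hy).2] at hyr; exact lt_irrefl y hyr
    · have := hYmono hr (hρmem y hy) h
      rw [(hρ y hy).2] at this
      linarith
  have hρgt : ∀ y ∈ Ico (0:ℝ) 1, ∀ r ∈ D, Y r < y → r < ρ y := by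
    intro y hy r hr hyr
    by_contra hcon
    push_neg at hcon
    rcases eq_or_lt_of_le hcon with h | h
    · rw [← h] at hyr; rw [(hρ y hy).2] at hyr; exact lt_irrefl y hyr
    · have := hYmono (hρmem y hy) hr h
      rw [(hρ y hy).2] at this
      linarith
  -- continuity of ρ
  have hρcont : ContinuousOn ρ (Ico 0 1) := by
    intro y₀ hy₀
    rw [Metric.continuousWithinAt_iff]
    intro ε hε
    have hr₀D : ρ y₀ ∈ D := hρmem y₀ hy₀
    have hr₀0 : 0 ≤ ρ y₀ := hDsub _ hr₀D
    obtain ⟨r', hr'D, hr'gt⟩ := hDopen (ρ y₀) hr₀D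
    have hr₁D : min r' (ρ y₀ + ε/2) ∈ D := by
      apply hDicc r' hr'D
      constructor
      · apply le_min (le_trans hr₀0 hr'gt.le) (by linarith)
      · exact min_le_left _ _
    have hr₀r₁ : ρ y₀ < min r' (ρ y₀ + ε/2) := lt_min hr'gt (by linarith)
    have hy₁gt : y₀ < Y (min r' (ρ y₀ + ε/2)) := by
      have := hYmono hr₀D hr₁D hr₀r₁
      rwa [(hρ y₀ hy₀).2] at this
    rcases eq_or_lt_of_le hy₀.1 with hy₀0 | hy₀pos
    · -- y₀ = 0, ρ y₀ = 0
      refine ⟨Y (min r' (ρ y₀ + ε/2)) - y₀, by linarith, ?_⟩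
      intro y hy hdist
      rw [Real.dist_eq] at hdist
      have hylt : y < Y (min r' (ρ y₀ + ε/2)) := by
        rcases abs_lt.1 hdist with ⟨h1, h2⟩
        linarith
      have h3 : ρ y < min r' (ρ y₀ + ε/2) := hρlt y hy _ hr₁D hylt
      have h4 : ρ y₀ = 0 := by rw [← hy₀0] at hy₀ ⊢; exact hρ0
      have h5 : 0 ≤ ρ y := hDsub _ (hρmem y hy)
      rw [Real.dist_eq, h4]
      rw [abs_of_nonneg (by linarith)]
      rw [h4] at h3
      have h6 := min_le_right r' (0 + ε/2)
      linarith [lt_of_lt_of_le h3 h6]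
    · -- y₀ > 0, ρ y₀ > 0
      have hr₀pos : 0 < ρ y₀ := hρpos y₀ hy₀ hy₀pos
      have hr₂D : max (ρ y₀ / 2) (ρ y₀ - ε/2) ∈ D := by
        apply hDicc (ρ y₀) hr₀D
        constructor
        · exact le_max_iff.2 (Or.inl (by linarith))
        · apply max_le (by linarith) (by linarith)
      have hr₂lt : max (ρ y₀ / 2) (ρ y₀ - ε/2) < ρ y₀ := max_lt (by linarith) (by linarith)
      have hy₂lt : Y (max (ρ y₀ / 2) (ρ y₀ - ε/2)) < y₀ := by
        have := hYmono hr₂D hr₀D hr₂lt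
        rwa [(hρ y₀ hy₀).2] at this
      refine ⟨min (Y (min r' (ρ y₀ + ε/2)) - y₀) (y₀ - Y (max (ρ y₀ / 2) (ρ y₀ - ε/2))),
        lt_min (by linarith) (by linarith), ?_⟩
      intro y hy hdist
      rw [Real.dist_eq] at hdist
      rcases abs_lt.1 hdist with ⟨h1, h2⟩
      have hd1 := lt_of_lt_of_le hdist (min_le_left _ _)
      have hd2 := lt_of_lt_of_le hdist (min_le_right _ _)
      rcases abs_lt.1 hd1 with ⟨h11, h12⟩
      rcases abs_lt.1 hd2 with ⟨h21, h22⟩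
      have hylt : y < Y (min r' (ρ y₀ + ε/2)) := by linarith
      have hygt : Y (max (ρ y₀ / 2) (ρ y₀ - ε/2)) < y := by linarith
      have h3 : ρ y < min r' (ρ y₀ + ε/2) := hρlt y hy _ hr₁D hylt
      have h4 : max (ρ y₀ / 2) (ρ y₀ - ε/2) < ρ y := hρgt y hy _ hr₂D hygt
      have h5 := min_le_right r' (ρ y₀ + ε/2)
      have h6 := le_max_right (ρ y₀ / 2) (ρ y₀ - ε/2)
      rw [Real.dist_eq]
      rw [abs_lt]
      constructor <;> linarith
  -- the function h and its derivative
  have hgabs : ∀ r : ℝ, |g r| = |fd r| ^ (p-1) := by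
    intro r
    rcases eq_or_ne (fd r) 0 with h | h
    · rw [hgdef]; simp [h, Real.zero_rpow hpn]
    · have h1 : |g r| = |fd r| ^ (p-2) * |fd r| := by
        rw [hgdef]
        simp only
        rw [abs_mul, abs_of_nonneg (Real.rpow_nonneg (abs_nonneg _) _)]
      rw [h1]
      nth_rewrite 2 [← Real.rpow_one |fd r|]
      rw [← Real.rpow_add (abs_pos.2 h)]
      ring_nf
  have hmul1 : (p-1) * q = p := by rw [hqdef]; field_simp
  have hhval : ∀ r : ℝ, |g r| ^ q = |fd r| ^ p := by
    intro r
    rw [hgabs, ← Real.rpow_mul (abs_nonneg _), hmul1]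
  have hfd_eq : ∀ r : ℝ, |g r| ^ (q-2) * g r = fd r := by
    intro r
    rcases eq_or_ne (fd r) 0 with h | h
    · have hg0 : g r = 0 := by rw [hgdef]; simp [h]
      rw [hg0, mul_zero, h]
    · have hmul2 : (p-1) * (q-2) = 2-p := by rw [hqdef]; field_simp; ring
      rw [hgabs, ← Real.rpow_mul (abs_nonneg _), hmul2, hgdef]
      simp only
      rw [← mul_assoc, ← Real.rpow_add (abs_pos.2 h)]
      rw [show (2:ℝ)-p+(p-2) = 0 by ring, Real.rpow_zero, one_mul]
  set h : ℝ → ℝ := fun r => |g r| ^ q / a ^ p with hhdef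
  have hDhAt : ∀ r : ℝ, 0 < r → HasDerivAt h (q * fd r * gd r / a ^ p) r := by
    intro r hr
    have h1 : HasDerivAt (fun s => |g s| ^ q) ((q * |g r| ^ (q-2) * g r) * gd r) r :=
      (abs_rpow_hasDerivAt hq1 (g r)).comp r (hDgAt r hr)
    have h2 := h1.div_const (a ^ p)
    have h3 : (q * |g r| ^ (q-2) * g r) * gd r = q * fd r * gd r := by
      rw [mul_assoc q, hfd_eq r]
    rw [h3] at h2
    exact h2
  have habs_cont : Continuous (fun x : ℝ => |x| ^ q) :=
    continuous_iff_continuousAt.2 (fun x => (abs_rpow_hasDerivAt hq1 x).continuousAt)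
  have hhc : ContinuousOn h (Ici 0) := (habs_cont.comp_continuousOn hgc).div_const _
  -- ψ and ψd
  set ψ : ℝ → ℝ := fun y => h (ρ y) with hψdef
  set ψd : ℝ → ℝ := fun y => -(q * gd (ρ y)) / a ^ (p-1) with hψddef
  have hap_split : a ^ (p-1) * a = a ^ p := by
    nth_rewrite 2 [← Real.rpow_one a]
    rw [← Real.rpow_add ha]
    ring_nf
  have ha2p : a ^ (2-p) * a ^ (p-1) = a := by
    rw [← Real.rpow_add ha]
    rw [show (2:ℝ)-p+(p-1) = 1 by ring, Real.rpow_one]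
  refine ⟨ψ, ψd, ?_, ?_, ?_, ?_, ?_, ?_, ?_, ?_, ?_⟩
  · -- well defined
    intro r hr0 hrext
    have hrD : r ∈ D := by rw [hDD]; exact ⟨hr0, hrext⟩
    have : (1 : ℝ) - f r / a = Y r := rfl
    rw [hψdef]
    simp only
    rw [this, hρY r hrD, hhdef]
    simp only
    rw [hhval]
  · -- derivative
    intro y₀ hy₀
    rw [hasDerivWithinAt_iff_tendsto_slope]
    have hr₀D : ρ y₀ ∈ D := hρmem y₀ hy₀
    have hr₀0 : 0 ≤ ρ y₀ := hDsub _ hr₀D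
    rw [Metric.tendsto_nhdsWithin_nhds]
    intro ε hε
    have hΦc : ContinuousOn (fun s => -(q * gd s) / a ^ (p-1)) (Ici 0) :=
      ((continuousOn_const.mul hCgd).neg).div_const _
    have hΦc₀ := hΦc (ρ y₀) hr₀0
    rw [Metric.continuousWithinAt_iff] at hΦc₀
    obtain ⟨δ₁, hδ₁pos, hδ₁⟩ := hΦc₀ ε hε
    have hρc₀ := hρcont y₀ hy₀
    rw [Metric.continuousWithinAt_iff] at hρc₀
    obtain ⟨δ₂, hδ₂pos, hδ₂⟩ := hρc₀ δ₁ hδ₁pos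
    refine ⟨δ₂, hδ₂pos, ?_⟩
    intro y hy hdisty
    have hyI : y ∈ Ico (0:ℝ) 1 := hy.1
    have hyne : y ≠ y₀ := hy.2
    have hrD : ρ y ∈ D := hρmem y hyI
    have hrne : ρ y ≠ ρ y₀ := by
      intro hcon
      apply hyne
      rw [← (hρ y hyI).2, hcon, (hρ y₀ hy₀).2]
    have hdistr : |ρ y - ρ y₀| < δ₁ := by
      have := hδ₂ hyI hdisty
      rwa [Real.dist_eq] at this
    -- Cauchy MVT helper
    have mvt : ∀ s t : ℝ, s ∈ D → t ∈ D → s < t → ∃ ξ ∈ Ioo s t,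
        (Y t - Y s) * (q * fd ξ * gd ξ / a ^ p) = (h t - h s) * (-(fd ξ)/a) := by
      intro s t hsD htD hst
      have hs0 : (0:ℝ) ≤ s := hDsub s hsD
      have hsub : Icc s t ⊆ Ici (0:ℝ) := fun x hx => le_trans hs0 hx.1
      exact exists_ratio_hasDerivAt_eq_ratio_slope h (fun ξ => q * fd ξ * gd ξ / a ^ p) hst
        (hhc.mono hsub)
        (fun x hx => hDhAt x (lt_of_le_of_lt hs0 hx.1))
        Y (fun ξ => -(fd ξ)/a)
        (hYc.mono hsub)
        (fun x hx => hYD x (lt_of_le_of_lt hs0 hx.1))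
    have hslope_eq : ∃ ξ : ℝ, ξ ∈ D ∧ 0 < ξ ∧ |ξ - ρ y₀| < δ₁ ∧
        slope ψ y₀ y = (q * fd ξ * gd ξ / a ^ p) / (-(fd ξ)/a) := by
      have hψy : ψ y = h (ρ y) := rfl
      have hψy₀ : ψ y₀ = h (ρ y₀) := rfl
      have hyY : Y (ρ y) = y := (hρ y hyI).2
      have hy₀Y : Y (ρ y₀) = y₀ := (hρ y₀ hy₀).2
      rcases hrne.lt_or_gt with hlt | hlt
      · obtain ⟨ξ, hξmem, heqn⟩ := mvt (ρ y) (ρ y₀) hrD hr₀D hlt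
        have hξ0 : 0 < ξ := lt_of_le_of_lt (hDsub _ hrD) hξmem.1
        have hξD : ξ ∈ D := hDicc (ρ y₀) hr₀D ⟨hξ0.le, hξmem.2.le⟩
        have hfdξ : fd ξ < 0 := (hDpos ξ hξD hξ0).2
        refine ⟨ξ, hξD, hξ0, ?_, ?_⟩
        · rw [abs_of_nonpos (by linarith [hξmem.2])]
          have h9 := abs_lt.1 hdistr
          linarith [hξmem.1, h9.1]
        · have hfdn : -(fd ξ)/a ≠ 0 := ne_of_gt (div_pos (neg_pos.2 hfdξ) ha)
          have hgoal : slope ψ y₀ y = (h (ρ y) - h (ρ y₀)) / (y - y₀) :=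
            slope_def_field ψ y₀ y
          rw [hgoal, div_eq_div_iff (sub_ne_zero.2 hyne) hfdn]
          rw [hyY, hy₀Y] at heqn
          linear_combination heqn
      · obtain ⟨ξ, hξmem, heqn⟩ := mvt (ρ y₀) (ρ y) hr₀D hrD hlt
        have hξ0 : 0 < ξ := lt_of_le_of_lt hr₀0 hξmem.1
        have hξD : ξ ∈ D := hDicc (ρ y) hrD ⟨hξ0.le, hξmem.2.le⟩
        have hfdξ : fd ξ < 0 := (hDpos ξ hξD hξ0).2
        refine ⟨ξ, hξD, hξ0, ?_, ?_⟩
        · rw [abs_of_nonneg (by linarith [hξmem.1])]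
          have h9 := abs_lt.1 hdistr
          linarith [hξmem.2, h9.2]
        · have hfdn : -(fd ξ)/a ≠ 0 := ne_of_gt (div_pos (neg_pos.2 hfdξ) ha)
          have hgoal : slope ψ y₀ y = (h (ρ y) - h (ρ y₀)) / (y - y₀) :=
            slope_def_field ψ y₀ y
          rw [hgoal, div_eq_div_iff (sub_ne_zero.2 hyne) hfdn]
          rw [hyY, hy₀Y] at heqn
          linear_combination -heqn
    obtain ⟨ξ, hξD, hξ0, hξdist, hξslope⟩ := hslope_eq
    have hfdξ : fd ξ < 0 := (hDpos ξ hξD hξ0).2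
    have hval : (q * fd ξ * gd ξ / a ^ p) / (-(fd ξ)/a) = -(q * gd ξ) / a ^ (p-1) := by
      have hfdne : fd ξ ≠ 0 := ne_of_lt hfdξ
      rw [div_eq_div_iff (by rw [div_ne_zero_iff]; exact ⟨neg_ne_zero.2 hfdne, ha.ne'⟩) hann]
      field_simp
      rw [← hap_split]
      ring
    rw [hξslope, hval]
    have := hδ₁ (hDsub ξ hξD) (by rw [Real.dist_eq]; exact hξdist)
    exact this
  · -- continuity of ψd
    have : ContinuousOn (fun s => -(q * gd s) / a ^ (p-1)) (Ici 0) :=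
      ((continuousOn_const.mul hCgd).neg).div_const _
    exact this.comp hρcont (fun y hy => hDsub _ (hρmem y hy))
  · -- nonneg
    intro y hy
    rw [hψdef]
    simp only
    rw [hhdef]
    simp only
    positivity
  · -- positive
    intro y hy
    have hyI : y ∈ Ico (0:ℝ) 1 := ⟨hy.1.le, hy.2⟩
    have hr : 0 < ρ y := hρpos y hyI hy.1
    have hfdneg : fd (ρ y) < 0 := (hDpos _ (hρmem y hyI) hr).2
    rw [hψdef]
    simp only
    rw [hhdef]
    simp only
    rw [hhval]
    apply div_pos (Real.rpow_pos_of_pos (abs_pos.2 hfdneg.ne) _) (Real.rpow_pos_of_pos ha _)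
  · -- ψ 0 = 0
    rw [hψdef]
    simp only
    rw [hρ0, hhdef]
    simp only
    rw [hhval, hfd0]
    simp [Real.zero_rpow (by linarith : p ≠ 0)]
  · -- ODE
    intro y hy
    have hyI : y ∈ Ico (0:ℝ) 1 := ⟨hy.1.le, hy.2⟩
    have hrD : ρ y ∈ D := hρmem y hyI
    have hrpos : 0 < ρ y := hρpos y hyI hy.1
    have hfr_eq : f (ρ y) = a * (1 - y) := by
      have hYr : Y (ρ y) = y := (hρ y hyI).2
      rw [hYdef] at hYr
      simp only at hYr
      field_simp at hYr
      linarith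
    have hgd_eq : gd (ρ y) = |fd (ρ y)| ^ (p-1) - f (ρ y) := by
      have := heq (ρ y) hrpos
      linarith
    have hψ_pow : ψ y ^ ((p-1)/p) = |fd (ρ y)| ^ (p-1) / a ^ (p-1) := by
      rw [hψdef]
      simp only
      rw [hhdef]
      simp only
      rw [hhval]
      rw [Real.div_rpow (Real.rpow_nonneg (abs_nonneg _) _) (Real.rpow_nonneg ha.le _)]
      rw [← Real.rpow_mul (abs_nonneg _), ← Real.rpow_mul ha.le]
      rw [show p * ((p-1)/p) = p - 1 by field_simp]
    rw [hψ_pow]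
    rw [hψddef]
    simp only
    rw [hgd_eq, hfr_eq]
    have e1 : a ^ (2-p) = a / a ^ (p-1) := by
      rw [eq_div_iff hann]
      exact ha2p
    rw [e1, hqdef]
    field_simp
    ring
  · -- ψd 0
    rw [hψddef]
    simp only
    rw [hρ0, hgd0]
    have e1 : a ^ (2-p) = a / a ^ (p-1) := by
      rw [eq_div_iff hann]
      exact ha2p
    rw [e1, hqdef]
    field_simp
  · -- ψd 0 positive
    rw [hψddef]
    simp only
    rw [hρ0, hgd0]
    apply div_pos
    · rw [mul_neg, neg_neg]
      exact mul_pos (by rw [hqdef]; positivity) ha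
    · exact Real.rpow_pos_of_pos ha _

/-- `f(r) → 0` as `r → R(a)` (within `(0,R(a))` if `R(a) < ∞`, as `r → ∞`
if `R(a) = ∞`), `f` is a decreasing bijection from `[0,R(a))` onto `(0,a]`, and the function
`ψ` defined by `ψ(1 - f(r)/a) = |f'(r)|^p/a^p` is well defined, `C¹` on `[0,1)`, positive on
`(0,1)`, and solves `ψ' + (p/(p-1)) ψ^{(p-1)/p} = (p a^{2-p}/(p-1))(1-y)` on `(0,1)` with
`ψ(0) = 0`; in particular `ψ'(0) = p a^{2-p}/(p-1) > 0`. -/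
theorem stmt4 (p a : ℝ) (hp : p ∈ Set.Ioo (1:ℝ) 2) (ha : 0 < a)
    (f fd gd : ℝ → ℝ) (hf : IsSol p a f fd gd) :
    ({r : ℝ | 0 < r ∧ f r = 0}.Nonempty →
      Tendsto f (𝓝[<] (sInf {r : ℝ | 0 < r ∧ f r = 0})) (𝓝 0)) ∧
    ({r : ℝ | 0 < r ∧ f r = 0} = ∅ → Tendsto f atTop (𝓝 0)) ∧
    StrictAntiOn f {r : ℝ | 0 ≤ r ∧ (r : EReal) < extTime f} ∧
    f '' {r : ℝ | 0 ≤ r ∧ (r : EReal) < extTime f} = Set.Ioc 0 a ∧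
    ∃ ψ ψd : ℝ → ℝ,
      (∀ r : ℝ, 0 ≤ r → (r : EReal) < extTime f →
        ψ (1 - f r / a) = |fd r| ^ p / a ^ p) ∧
      (∀ y ∈ Set.Ico (0:ℝ) 1, HasDerivWithinAt ψ (ψd y) (Set.Ico 0 1) y) ∧
      ContinuousOn ψd (Set.Ico 0 1) ∧
      (∀ y ∈ Set.Ico (0:ℝ) 1, 0 ≤ ψ y) ∧
      (∀ y ∈ Set.Ioo (0:ℝ) 1, 0 < ψ y) ∧
      ψ 0 = 0 ∧
      (∀ y ∈ Set.Ioo (0:ℝ) 1,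
        ψd y + (p/(p-1)) * ψ y ^ ((p-1)/p) = (p * a ^ (2-p) / (p-1)) * (1-y)) ∧
      ψd 0 = p * a ^ (2-p) / (p-1) ∧ 0 < ψd 0 := by
  have hDf := hf.1
  have hf0 : f 0 = a := hf.2.2.2.2.2.1
  have hfc : ContinuousOn f (Ici 0) := fun r hr => (hDf r hr).continuousWithinAt
  have hDfAt : ∀ r : ℝ, 0 < r → HasDerivAt f (fd r) r :=
    fun r hr => (hDf r hr.le).hasDerivAt (Ici_mem_nhds hr)
  set Z : Set ℝ := {r : ℝ | 0 < r ∧ f r = 0} with hZdef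
  set D : Set ℝ := {r : ℝ | 0 ≤ r ∧ (r : EReal) < extTime f} with hDdef
  have key :
      (Z.Nonempty → Tendsto f (𝓝[<] (sInf Z)) (𝓝 0)) ∧
      (Z = ∅ → Tendsto f atTop (𝓝 0)) ∧
      (∀ r ∈ D, Icc 0 r ⊆ D) ∧
      (∀ r ∈ D, ∃ r', r' ∈ D ∧ r < r') ∧
      (∀ r ∈ D, 0 < r → 0 < f r ∧ fd r < 0) ∧
      (0:ℝ) ∈ D ∧
      StrictAntiOn f D ∧
      f '' D = Ioc 0 a := by
    rcases eq_empty_or_nonempty Z with hZ | hZ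
    · -- no zeros
      have hzero : ∀ r, 0 < r → f r ≠ 0 := by
        intro r hr h0
        exact (eq_empty_iff_forall_notMem.mp hZ r) ⟨hr, h0⟩
      have hcore : ∀ s : ℝ, 0 < s → 0 < f s ∧ fd s < 0 :=
        fun s hs => core p a hp ha f fd gd hf (s+1) (fun t ht _ => hzero t ht) s hs (lt_add_one s)
      have htend := tendsto_of_no_zero p a hp ha f fd gd hf hzero
      have hext : extTime f = ⊤ := by
        have hempty : {x : EReal | ∃ r : ℝ, 0 < r ∧ f r = 0 ∧ x = (r : EReal)} = ∅ := by
          rw [eq_empty_iff_forall_notMem]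
          rintro x ⟨r, hr, h0, rfl⟩
          exact hzero r hr h0
        rw [extTime, hempty, sInf_empty]
      have hD : D = Ici 0 := by
        rw [hDdef]
        ext r
        simp [hext, EReal.coe_lt_top]
      have hDpos : ∀ r ∈ D, 0 < r → 0 < f r ∧ fd r < 0 := fun r _ hr => hcore r hr
      have hanti : StrictAntiOn f D := by
        rw [hD]
        apply strictAntiOn_of_deriv_neg (convex_Ici 0) hfc
        intro x hx
        rw [interior_Ici] at hx
        rw [(hDfAt x hx).deriv]
        exact (hcore x hx).2
      refine ⟨fun h => absurd h (by rw [hZ]; exact not_nonempty_empty), fun _ => htend,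
        ?_, ?_, hDpos, ?_, hanti, ?_⟩
      · intro r hr; rw [hD]; exact fun x hx => hx.1
      · intro r hr; rw [hD] at hr ⊢; exact ⟨r + 1, by simpa using le_trans hr (by linarith), lt_add_one r⟩
      · rw [hD]; exact self_mem_Ici
      · rw [hD]
        ext y
        constructor
        · rintro ⟨r, hr, rfl⟩
          rcases eq_or_lt_of_le (mem_Ici.1 hr) with h | h
          · rw [← h, hf0]; exact ⟨ha, le_rfl⟩
          · refine ⟨(hcore r h).1, ?_⟩
            have := hanti (by rw [hD]; exact self_mem_Ici) (by rw [hD]; exact hr) h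
            rw [hf0] at this
            exact this.le
        · rintro ⟨hy1, hy2⟩
          rcases eq_or_lt_of_le hy2 with h | h
          · exact ⟨0, self_mem_Ici, by rw [hf0, h]⟩
          · obtain ⟨b, hb1, hb2⟩ :=
              ((htend.eventually (eventually_lt_nhds hy1)).and (eventually_ge_atTop (0:ℝ))).exists
            have hIVT : y ∈ f '' Ioo 0 b := by
              apply intermediate_value_Ioo' hb2 (hfc.mono Icc_subset_Ici_self)
              rw [hf0]
              exact ⟨hb1, h⟩
            obtain ⟨r, hr, rfl⟩ := hIVT
            exact ⟨r, hr.1.le, rfl⟩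
    · -- zeros exist
      have hbdd : BddBelow Z := ⟨0, fun r hr => hr.1.le⟩
      have hclosed : IsClosed (Ici 0 ∩ f ⁻¹' {0}) :=
        ContinuousOn.preimage_isClosed_of_isClosed hfc isClosed_Ici isClosed_singleton
      set R : ℝ := sInf Z with hRdef
      have hRin : R ∈ Ici 0 ∩ f ⁻¹' {0} := by
        apply hclosed.closure_subset
        apply closure_mono (show Z ⊆ Ici 0 ∩ f ⁻¹' {0} from fun r hr => ⟨hr.1.le, hr.2⟩)
        exact csInf_mem_closure hZ hbdd
      have hfR : f R = 0 := hRin.2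
      have hR0 : 0 ≤ R := hRin.1
      have hRpos : 0 < R := by
        rcases eq_or_lt_of_le hR0 with h | h
        · exfalso; rw [← h] at hfR; rw [hf0] at hfR; linarith
        · exact h
      have hnovanish : ∀ s, 0 < s → s < R → f s ≠ 0 := fun s hs hsR h0 =>
        (not_le.2 hsR) (csInf_le hbdd ⟨hs, h0⟩)
      have hcore := core p a hp ha f fd gd hf R hnovanish
      have hext : extTime f = (R : EReal) := by
        apply le_antisymm
        · exact sInf_le ⟨R, hRpos, hfR, rfl⟩
        · apply le_sInf
          rintro x ⟨r, hr0, hfr, rfl⟩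
          exact EReal.coe_le_coe_iff.2 (csInf_le hbdd ⟨hr0, hfr⟩)
      have hD : D = Ico 0 R := by
        rw [hDdef]
        ext r
        simp [hext, EReal.coe_lt_coe_iff, mem_Ico]
      have hDpos : ∀ r ∈ D, 0 < r → 0 < f r ∧ fd r < 0 := by
        intro r hr hrpos
        rw [hD] at hr
        exact hcore r hrpos hr.2
      have hanti : StrictAntiOn f D := by
        rw [hD]
        apply strictAntiOn_of_deriv_neg (convex_Ico 0 R)
          (hfc.mono (fun x hx => hx.1))
        intro x hx
        rw [interior_Ico] at hx
        rw [(hDfAt x hx.1).deriv]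
        exact (hcore x hx.1 hx.2).2
      have hconj1 : Tendsto f (𝓝[<] R) (𝓝 0) := by
        have hca : ContinuousAt f R := hfc.continuousAt (Ici_mem_nhds hRpos)
        have := hca.tendsto.mono_left (nhdsWithin_le_nhds (s := Iio R))
        rwa [hfR] at this
      refine ⟨fun _ => hconj1, fun h => absurd h hZ.ne_empty, ?_, ?_, hDpos, ?_, hanti, ?_⟩
      · intro r hr
        rw [hD] at hr ⊢
        exact fun x hx => ⟨hx.1, lt_of_le_of_lt hx.2 hr.2⟩
      · intro r hr
        rw [hD] at hr ⊢
        exact ⟨(r + R)/2, ⟨by linarith [hr.1, hr.2], by linarith [hr.2]⟩, by linarith [hr.2]⟩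
      · rw [hD]; exact ⟨le_rfl, hRpos⟩
      · rw [hD]
        ext y
        constructor
        · rintro ⟨r, hr, rfl⟩
          rcases eq_or_lt_of_le hr.1 with h | h
          · rw [← h, hf0]; exact ⟨ha, le_rfl⟩
          · refine ⟨(hcore r h hr.2).1, ?_⟩
            have := hanti (by rw [hD]; exact ⟨le_rfl, hRpos⟩) (by rw [hD]; exact hr) h
            rw [hf0] at this
            exact this.le
        · rintro ⟨hy1, hy2⟩
          rcases eq_or_lt_of_le hy2 with h | h
          · exact ⟨0, ⟨le_rfl, hRpos⟩, by rw [hf0, h]⟩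
          · have hIVT : y ∈ f '' Ioo 0 R := by
              apply intermediate_value_Ioo' hR0 (hfc.mono Icc_subset_Ici_self)
              rw [hf0, hfR]
              exact ⟨hy1, h⟩
            obtain ⟨r, hr, rfl⟩ := hIVT
            exact ⟨r, ⟨hr.1.le, hr.2⟩, rfl⟩
  obtain ⟨hconj1, hconj2, hDicc, hDopen, hDpos, hD0, hanti, himage⟩ := key
  refine ⟨hconj1, hconj2, hanti, himage, ?_⟩
  exact psi_part p a hp ha f fd gd hf D hDdef hDicc hDopen hDpos hD0 hanti himage
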